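/- (Bias decomposition, the central identity in the proof of Theorem 2.) Let φ̂_unc := ∑_{a∈α} ⟨ŵ(a) + φ̂(A, a), Ĝ(a)⟩ + ⟨ŵ(A), Y − Ĝ(A)⟩ / Ĥ(A) be the uncentered efficient influence function with the nuisance functions replaced by fixed estimates. Then E[φ̂_unc] − Ψ(w) = E[∑_{a∈α} ⟨ŵ(a) − w(a) + ∑_{a'∈α} H(a')·φ̂(a', a), G(a)⟩] + E[∑_{a∈α} ⟨ŵ(a), Ĝ(a) − G(a)⟩ · (1 − H(a)/Ĥ(a))] + E[∑_{a∈α} ⟨φ̂(A, a) − φ(A, a), Ĝ(a) − G(a)⟩]. -/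

import Mathlib

open MeasureTheory RealInnerProductSpace

/-- Cluster-level treatment probability `H(a) = P(A = a | m) = μ[1_{A=a}|m]`. -/
noncomputable def condH {Ω α : Type*} {mΩ : MeasurableSpace Ω} [DecidableEq α]
    (μ : Measure Ω) (m : MeasurableSpace Ω) (A : Ω → α) (a : α) : Ω → ℝ :=
  μ[fun ω => if A ω = a then (1:ℝ) else 0|m]

/-- Cluster-level outcome regression `G(a) = μ[Y·1_{A=a}|m] / H(a)` (componentwise). -/
noncomputable def condG {Ω α : Type*} {mΩ : MeasurableSpace Ω} [DecidableEq α] {n : ℕ}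
    (μ : Measure Ω) (m : MeasurableSpace Ω) (A : Ω → α)
    (Y : Ω → EuclideanSpace ℝ (Fin n)) (a : α) : Ω → EuclideanSpace ℝ (Fin n) :=
  fun ω => (condH μ m A a ω)⁻¹ •
    (μ[fun ω' => (if A ω' = a then (1:ℝ) else 0) • Y ω'|m]) ω



section Aux

lemma aux_coord_le {n : ℕ} (x : EuclideanSpace ℝ (Fin n)) (i : Fin n) : |x i| ≤ ‖x‖ := by
  rw [EuclideanSpace.norm_eq]
  have h1 : |x i| = Real.sqrt (‖x i‖ ^ 2) := by
    rw [Real.sqrt_sq_eq_abs, abs_norm, Real.norm_eq_abs]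
  rw [h1]
  exact Real.sqrt_le_sqrt (Finset.single_le_sum (f := fun j => ‖x j‖ ^ 2)
    (fun j _ => sq_nonneg _) (Finset.mem_univ i))

lemma aux_norm_le {n : ℕ} {C : ℝ} (hC : 0 ≤ C) (x : EuclideanSpace ℝ (Fin n))
    (h : ∀ i, |x i| ≤ C) : ‖x‖ ≤ Real.sqrt n * C := by
  rw [EuclideanSpace.norm_eq]
  calc Real.sqrt (∑ i, ‖x i‖ ^ 2) ≤ Real.sqrt (∑ _i : Fin n, C ^ 2) := by
        apply Real.sqrt_le_sqrt
        refine Finset.sum_le_sum fun i _ => ?_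
        rw [Real.norm_eq_abs]
        exact pow_le_pow_left₀ (abs_nonneg _) (h i) 2
    _ = Real.sqrt n * C := by
        rw [Finset.sum_const, Finset.card_univ, Fintype.card_fin, nsmul_eq_mul,
          Real.sqrt_mul (by positivity), Real.sqrt_sq hC]

lemma aux_proj_integral {Ω : Type*} {mm : MeasurableSpace Ω} (μ : Measure Ω) {n : ℕ}
    {X : Ω → EuclideanSpace ℝ (Fin n)} (hX : Integrable X μ) (i : Fin n) :
    ∫ ω, X ω i ∂μ = (EuclideanSpace.proj (𝕜 := ℝ) i) (∫ ω, X ω ∂μ) := by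
  rw [← (EuclideanSpace.proj (𝕜 := ℝ) i).integral_comp_comm hX]; rfl

variable {Ω : Type*} {mΩ : MeasurableSpace Ω} {μ : Measure Ω} [IsProbabilityMeasure μ]
  {m : MeasurableSpace Ω}

lemma aux_int_bdd {E : Type*} [NormedAddCommGroup E] {f : Ω → E}
    (hf : AEStronglyMeasurable[mΩ] f μ) {C : ℝ} (h : ∀ᵐ ω ∂μ, ‖f ω‖ ≤ C) : Integrable f μ :=
  (integrable_const C).mono' hf h

lemma aux_int_inner {n : ℕ} {X Z : Ω → EuclideanSpace ℝ (Fin n)}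
    (hX : AEStronglyMeasurable[mΩ] X μ) (hZ : AEStronglyMeasurable[mΩ] Z μ)
    {CX CZ : ℝ} (hXb : ∀ᵐ ω ∂μ, ‖X ω‖ ≤ CX) (hZb : ∀ᵐ ω ∂μ, ‖Z ω‖ ≤ CZ) :
    Integrable (fun ω => ⟪X ω, Z ω⟫) μ := by
  refine aux_int_bdd (hX.inner hZ) (C := CX * CZ) ?_
  filter_upwards [hXb, hZb] with ω h1 h2
  calc ‖⟪X ω, Z ω⟫‖ ≤ ‖X ω‖ * ‖Z ω‖ := norm_inner_le_norm _ _
    _ ≤ CX * CZ := mul_le_mul h1 h2 (norm_nonneg _) ((norm_nonneg _).trans h1)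

lemma aux_tower_mul (hm : m ≤ mΩ) {f g : Ω → ℝ} (hf : StronglyMeasurable[m] f)
    (hg : Integrable g μ) (hfg : Integrable (fun ω => f ω * g ω) μ) :
    ∫ ω, f ω * g ω ∂μ = ∫ ω, f ω * (μ[g|m]) ω ∂μ := by
  haveI : SigmaFinite (μ.trim hm) := by infer_instance
  have h1 : μ[f * g|m] =ᵐ[μ] f * μ[g|m] := condExp_mul_of_stronglyMeasurable_left hf hfg hg
  calc ∫ ω, f ω * g ω ∂μ = ∫ ω, (μ[f * g|m]) ω ∂μ := (integral_condExp hm).symm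
    _ = ∫ ω, f ω * (μ[g|m]) ω ∂μ := integral_congr_ae h1

lemma aux_condexp_coord (hm : m ≤ mΩ) {n : ℕ} {X : Ω → EuclideanSpace ℝ (Fin n)}
    (hX : Integrable X μ) (i : Fin n) :
    (fun ω => (μ[X|m]) ω i) =ᵐ[μ] μ[fun ω => X ω i|m] := by
  haveI : SigmaFinite (μ.trim hm) := by infer_instance
  refine ae_eq_condExp_of_forall_setIntegral_eq hm
    ((EuclideanSpace.proj (𝕜 := ℝ) i).integrable_comp hX) ?_ ?_ ?_
  · have hic : Integrable (μ[X|m]) μ := integrable_condExp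
    exact fun s _ _ =>
      ((EuclideanSpace.proj (𝕜 := ℝ) i).integrable_comp hic).restrict
  · intro s hs hμs
    have hic : Integrable (μ[X|m]) μ := integrable_condExp
    have h1 : ∫ ω in s, (μ[X|m]) ω i ∂μ =
        (EuclideanSpace.proj (𝕜 := ℝ) i) (∫ ω in s, (μ[X|m]) ω ∂μ) :=
      aux_proj_integral (μ.restrict s) hic.restrict i
    have h2 : ∫ ω in s, X ω i ∂μ = (EuclideanSpace.proj (𝕜 := ℝ) i) (∫ ω in s, X ω ∂μ) :=
      aux_proj_integral (μ.restrict s) hX.restrict i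
    rw [h1, h2, setIntegral_condExp hm hX hs]
  · exact StronglyMeasurable.aestronglyMeasurable
      ((EuclideanSpace.proj (𝕜 := ℝ) i).continuous.comp_stronglyMeasurable
        stronglyMeasurable_condExp)

lemma aux_tower_inner (hm : m ≤ mΩ) {n : ℕ} {u X : Ω → EuclideanSpace ℝ (Fin n)}
    (hu : StronglyMeasurable[m] u) {C : ℝ} (hub : ∀ᵐ ω ∂μ, ‖u ω‖ ≤ C)
    (hX : Integrable X μ) :
    ∫ ω, ⟪u ω, X ω⟫ ∂μ = ∫ ω, ⟪u ω, (μ[X|m]) ω⟫ ∂μ := by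
  haveI : SigmaFinite (μ.trim hm) := by infer_instance
  have hXi : ∀ i : Fin n, Integrable (fun ω => X ω i) μ := fun i =>
    (EuclideanSpace.proj (𝕜 := ℝ) i).integrable_comp hX
  have hic : Integrable (μ[X|m]) μ := integrable_condExp
  have hCXi : ∀ i : Fin n, Integrable (fun ω => (μ[X|m]) ω i) μ := fun i =>
    (EuclideanSpace.proj (𝕜 := ℝ) i).integrable_comp hic
  have hui : ∀ i : Fin n, StronglyMeasurable[m] (fun ω => u ω i) := fun i =>
    (EuclideanSpace.proj (𝕜 := ℝ) i).continuous.comp_stronglyMeasurable hu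
  have huib : ∀ i : Fin n, ∀ᵐ ω ∂μ, ‖u ω i‖ ≤ C := fun i => by
    filter_upwards [hub] with ω h
    rw [Real.norm_eq_abs]; exact (aux_coord_le _ i).trans h
  have hprod : ∀ i : Fin n, Integrable (fun ω => u ω i * X ω i) μ := fun i =>
    (hXi i).bdd_mul (((hui i).mono hm).aestronglyMeasurable) (huib i)
  have hprod2 : ∀ i : Fin n, Integrable (fun ω => u ω i * (μ[X|m]) ω i) μ := fun i =>
    (hCXi i).bdd_mul (((hui i).mono hm).aestronglyMeasurable) (huib i)
  simp only [PiLp.inner_apply, RCLike.inner_apply, conj_trivial]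
  simp only [fun (ω : Ω) (x : Fin n) => mul_comm ((X ω).ofLp x) ((u ω).ofLp x),
    fun (ω : Ω) (x : Fin n) => mul_comm ((μ[X|m] ω).ofLp x) ((u ω).ofLp x)]
  rw [integral_finset_sum _ (fun i _ => hprod i), integral_finset_sum _ (fun i _ => hprod2 i)]
  refine Finset.sum_congr rfl fun i _ => ?_
  rw [aux_tower_mul hm (hui i) (hXi i) (hprod i)]
  refine integral_congr_ae ?_
  filter_upwards [aux_condexp_coord hm hX i] with ω h
  rw [← h]

end Aux

set_option maxHeartbeats 2000000 in
/-- (Bias decomposition, the central identity in the proof of Theorem 2.)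
With `φ̂_unc = ∑_a ⟪ŵ(a) + φ̂(A,a), Ĝ(a)⟫ + ⟪ŵ(A), Y − Ĝ(A)⟫/Ĥ(A)` the
uncentered efficient influence function evaluated at fixed nuisance estimates,
`E[φ̂_unc] − Ψ(w)
  = E[∑_a ⟪ŵ(a) − w(a) + ∑_{a'} H(a')·φ̂(a',a), G(a)⟫]
  + E[∑_a ⟪ŵ(a), Ĝ(a) − G(a)⟫·(1 − H(a)/Ĥ(a))]
  + E[∑_a ⟪φ̂(A,a) − φ(A,a), Ĝ(a) − G(a)⟫]`. -/
theorem stmt3 {Ω : Type*} {mΩ : MeasurableSpace Ω}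
    (μ : Measure Ω) [IsProbabilityMeasure μ]
    (m : MeasurableSpace Ω) (hm : m ≤ mΩ)
    {α : Type*} [Fintype α] [DecidableEq α] [MeasurableSpace α] [MeasurableSingletonClass α]
    {n : ℕ}
    (A : Ω → α) (hA : Measurable[mΩ] A)
    (Y : Ω → EuclideanSpace ℝ (Fin n)) (hY : Measurable[mΩ] Y)
    (CY : ℝ) (hYb : ∀ ω, ‖Y ω‖ ≤ CY)
    -- positivity of the cluster-level treatment probability
    (c : ℝ) (hc : 0 < c)
    (hH : ∀ a : α, ∀ᵐ ω ∂μ, c ≤ condH μ m A a ω)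
    -- bounded m-measurable weight functions
    (w : α → Ω → EuclideanSpace ℝ (Fin n)) (hw : ∀ a, Measurable[m] (w a))
    (Cw : ℝ) (hwb : ∀ a ω, ‖w a ω‖ ≤ Cw)
    -- bounded m-measurable influence functions of the weights, with conditional mean zero
    (φ : α → α → Ω → EuclideanSpace ℝ (Fin n)) (hφ : ∀ a' a, Measurable[m] (φ a' a))
    (Cφ : ℝ) (hφb : ∀ a' a ω, ‖φ a' a ω‖ ≤ Cφ)
    (hφ0 : ∀ a : α, ∀ᵐ ω ∂μ, ∑ a', condH μ m A a' ω • φ a' a ω = 0)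
    -- fixed bounded m-measurable nuisance estimates
    (Gh : α → Ω → EuclideanSpace ℝ (Fin n)) (hGh : ∀ a, Measurable[m] (Gh a))
    (CG : ℝ) (hGhb : ∀ a ω, ‖Gh a ω‖ ≤ CG)
    (Hh : α → Ω → ℝ) (hHh : ∀ a, Measurable[m] (Hh a))
    (hHhc : ∀ a : α, ∀ᵐ ω ∂μ, c ≤ Hh a ω) (hHhb : ∀ a ω, Hh a ω ≤ 1)
    (wh : α → Ω → EuclideanSpace ℝ (Fin n)) (hwh : ∀ a, Measurable[m] (wh a))
    (Cwh : ℝ) (hwhb : ∀ a ω, ‖wh a ω‖ ≤ Cwh)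
    (φh : α → α → Ω → EuclideanSpace ℝ (Fin n)) (hφh : ∀ a' a, Measurable[m] (φh a' a))
    (Cφh : ℝ) (hφhb : ∀ a' a ω, ‖φh a' a ω‖ ≤ Cφh) :
    (∫ ω, ((∑ a, ⟪wh a ω + φh (A ω) a ω, Gh a ω⟫)
        + ⟪wh (A ω) ω, Y ω - Gh (A ω) ω⟫ / Hh (A ω) ω) ∂μ)
      - ∫ ω, ∑ a, ⟪w a ω, condG μ m A Y a ω⟫ ∂μ
    = (∫ ω, ∑ a,
          ⟪wh a ω - w a ω + ∑ a', condH μ m A a' ω • φh a' a ω,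
            condG μ m A Y a ω⟫ ∂μ)
      + (∫ ω, ∑ a,
          ⟪wh a ω, Gh a ω - condG μ m A Y a ω⟫
            * (1 - condH μ m A a ω / Hh a ω) ∂μ)
      + ∫ ω, ∑ a,
          ⟪φh (A ω) a ω - φ (A ω) a ω, Gh a ω - condG μ m A Y a ω⟫ ∂μ := by
  classical
  haveI : SigmaFinite (μ.trim hm) := by infer_instance
  -- nonneg versions of the bounds
  set CY' := max CY 0 with hCY'def
  set Cw' := max Cw 0 with hCw'def
  set Cwh' := max Cwh 0 with hCwh'def
  set Cφ' := max Cφ 0 with hCφ'def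
  set Cφh' := max Cφh 0 with hCφh'def
  set CG' := max CG 0 with hCG'def
  have bY : ∀ ω, ‖Y ω‖ ≤ CY' := fun ω => le_max_of_le_left (hYb ω)
  have bw : ∀ a ω, ‖w a ω‖ ≤ Cw' := fun a ω => le_max_of_le_left (hwb a ω)
  have bwh : ∀ a ω, ‖wh a ω‖ ≤ Cwh' := fun a ω => le_max_of_le_left (hwhb a ω)
  have bφ : ∀ a' a ω, ‖φ a' a ω‖ ≤ Cφ' := fun a' a ω => le_max_of_le_left (hφb a' a ω)
  have bφh : ∀ a' a ω, ‖φh a' a ω‖ ≤ Cφh' := fun a' a ω => le_max_of_le_left (hφhb a' a ω)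
  have bGh : ∀ a ω, ‖Gh a ω‖ ≤ CG' := fun a ω => le_max_of_le_left (hGhb a ω)
  -- the indicator functions
  set I : α → Ω → ℝ := fun a ω => if A ω = a then (1:ℝ) else 0 with hIdef
  have hImeas : ∀ a, Measurable[mΩ] (I a) := fun a =>
    Measurable.ite (hA (measurableSet_singleton a)) measurable_const measurable_const
  have hIbd : ∀ a ω, ‖I a ω‖ ≤ 1 := by
    intro a ω; simp only [hIdef]; split_ifs <;> simp
  have hIint : ∀ a, Integrable (I a) μ := fun a =>
    aux_int_bdd (hImeas a).aestronglyMeasurable (Filter.Eventually.of_forall (hIbd a))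
  have hIY : ∀ a, Integrable (fun ω => I a ω • Y ω) μ := by
    intro a
    refine aux_int_bdd ((hImeas a).aestronglyMeasurable.smul hY.aestronglyMeasurable)
      (C := CY') (Filter.Eventually.of_forall fun ω => ?_)
    calc ‖I a ω • Y ω‖ = ‖I a ω‖ * ‖Y ω‖ := norm_smul _ _
      _ ≤ 1 * CY' := mul_le_mul (hIbd a ω) (bY ω) (norm_nonneg _) zero_le_one
      _ = CY' := one_mul _
  -- facts about H
  have hHsm : ∀ a, StronglyMeasurable[m] (condH μ m A a) := fun a => stronglyMeasurable_condExp
  have hHaesm : ∀ a, AEStronglyMeasurable[mΩ] (condH μ m A a) μ := fun a =>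
    ((hHsm a).mono hm).aestronglyMeasurable
  have hH0 : ∀ a, ∀ᵐ ω ∂μ, 0 ≤ condH μ m A a ω := by
    intro a
    refine condExp_nonneg (Filter.Eventually.of_forall fun ω => ?_)
    simp only [hIdef, Pi.zero_apply]; split_ifs <;> norm_num
  have hH1 : ∀ a, ∀ᵐ ω ∂μ, condH μ m A a ω ≤ 1 := by
    intro a
    have h := condExp_mono (μ := μ) (m := m) (hIint a) (integrable_const (1:ℝ))
      (Filter.Eventually.of_forall fun ω => by
        simp only [hIdef, Pi.one_apply]; split_ifs <;> norm_num)
    rw [condExp_const hm (1:ℝ)] at h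
    exact h
  have bH : ∀ a, ∀ᵐ ω ∂μ, ‖condH μ m A a ω‖ ≤ 1 := by
    intro a
    filter_upwards [hH0 a, hH1 a] with ω h0 h1
    rw [Real.norm_eq_abs, abs_of_nonneg h0]; exact h1
  -- facts about K = condexp of I • Y
  set K : α → Ω → EuclideanSpace ℝ (Fin n) := fun a => μ[fun ω => I a ω • Y ω|m] with hKdef
  have hKsm : ∀ a, StronglyMeasurable[m] (K a) := fun a => stronglyMeasurable_condExp
  have hKbd : ∀ a, ∀ᵐ ω ∂μ, ‖K a ω‖ ≤ Real.sqrt n * CY' := by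
    intro a
    have hco : ∀ i : Fin n, ∀ᵐ ω ∂μ, |K a ω i| ≤ CY' := by
      intro i
      have hb : ∀ᵐ ω ∂μ, |(fun ω => (I a ω • Y ω) i) ω| ≤ (CY'.toNNReal : ℝ) := by
        refine Filter.Eventually.of_forall fun ω => ?_
        have h1 : |I a ω * Y ω i| ≤ CY' := by
          calc |I a ω * Y ω i| = |I a ω| * |Y ω i| := abs_mul _ _
            _ ≤ 1 * ‖Y ω‖ := mul_le_mul (hIbd a ω) (aux_coord_le (Y ω) i)
                (abs_nonneg _) zero_le_one
            _ ≤ CY' := by rw [one_mul]; exact bY ω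
        have h2 : ((CY'.toNNReal : ℝ)) = CY' :=
          Real.coe_toNNReal CY' (le_max_right _ _)
        rw [h2]
        simpa using h1
      have h2 := ae_bdd_condExp_of_ae_bdd (m := m) (R := CY'.toNNReal) hb
      have h3 := aux_condexp_coord hm (hIY a) i
      filter_upwards [h3, h2] with ω hω1 hω2
      have h4 : K a ω i = (μ[fun ω => (I a ω • Y ω) i|m]) ω := hω1
      rw [h4]
      calc |(μ[fun ω => (I a ω • Y ω) i|m]) ω| ≤ (CY'.toNNReal : ℝ) := hω2
        _ = CY' := Real.coe_toNNReal CY' (le_max_right _ _)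
    filter_upwards [ae_all_iff.2 hco] with ω hω
    exact aux_norm_le (le_max_right _ _) _ hω
  have hGdef : ∀ a ω, condG μ m A Y a ω = (condH μ m A a ω)⁻¹ • K a ω := fun a ω => rfl
  have hGsm : ∀ a, StronglyMeasurable[m] (condG μ m A Y a) := by
    intro a
    have h1 : Measurable[m] fun ω => (condH μ m A a ω)⁻¹ := (hHsm a).measurable.inv
    exact (h1.smul (hKsm a).measurable).stronglyMeasurable
  have hGaesm : ∀ a, AEStronglyMeasurable[mΩ] (condG μ m A Y a) μ := fun a =>
    ((hGsm a).mono hm).aestronglyMeasurable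
  set CGc := c⁻¹ * (Real.sqrt n * CY') with hCGcdef
  have bG : ∀ a, ∀ᵐ ω ∂μ, ‖condG μ m A Y a ω‖ ≤ CGc := by
    intro a
    filter_upwards [hH a, hKbd a] with ω h1 h2
    rw [hGdef a ω, norm_smul]
    have hpos : 0 < condH μ m A a ω := lt_of_lt_of_le hc h1
    have h3 : ‖(condH μ m A a ω)⁻¹‖ ≤ c⁻¹ := by
      rw [Real.norm_eq_abs, abs_inv, abs_of_pos hpos]
      exact inv_anti₀ hc h1
    exact mul_le_mul h3 h2 (norm_nonneg _) (inv_nonneg.2 hc.le)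
  have hKG : ∀ a, K a =ᵐ[μ] fun ω => condH μ m A a ω • condG μ m A Y a ω := by
    intro a
    filter_upwards [hH a] with ω h1
    have hne : condH μ m A a ω ≠ 0 := (lt_of_lt_of_le hc h1).ne'
    rw [hGdef a ω, smul_smul, mul_inv_cancel₀ hne, one_smul]
  -- facts about Hh⁻¹
  have bHhinv : ∀ a, ∀ᵐ ω ∂μ, ‖(Hh a ω)⁻¹‖ ≤ c⁻¹ := by
    intro a
    filter_upwards [hHhc a] with ω h1
    rw [Real.norm_eq_abs, abs_inv, abs_of_pos (lt_of_lt_of_le hc h1)]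
    exact inv_anti₀ hc h1
  -- to AEStronglyMeasurable[mΩ] helpers
  have toAE : ∀ {f : Ω → EuclideanSpace ℝ (Fin n)}, Measurable[m] f → AEStronglyMeasurable[mΩ] f μ :=
    fun hf => (hf.mono hm le_rfl).aestronglyMeasurable
  have toAER : ∀ {f : Ω → ℝ}, Measurable[m] f → AEStronglyMeasurable[mΩ] f μ :=
    fun hf => (hf.mono hm le_rfl).aestronglyMeasurable
  -- the auxiliary m-measurable functions
  set u : α → Ω → EuclideanSpace ℝ (Fin n) := fun a ω => (Hh a ω)⁻¹ • wh a ω with hudef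
  have husm : ∀ a, StronglyMeasurable[m] (u a) := fun a =>
    (((hHh a).inv).smul (hwh a)).stronglyMeasurable
  have hubd : ∀ a, ∀ᵐ ω ∂μ, ‖u a ω‖ ≤ c⁻¹ * Cwh' := by
    intro a
    filter_upwards [bHhinv a] with ω h1
    rw [hudef]
    calc ‖(Hh a ω)⁻¹ • wh a ω‖ = ‖(Hh a ω)⁻¹‖ * ‖wh a ω‖ := norm_smul _ _
      _ ≤ c⁻¹ * Cwh' := mul_le_mul h1 (bwh a ω) (norm_nonneg _)
          ((norm_nonneg _).trans h1)
  set g : α → Ω → ℝ := fun a' ω =>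
    (∑ a, ⟪φh a' a ω, Gh a ω⟫) - (Hh a' ω)⁻¹ * ⟪wh a' ω, Gh a' ω⟫ with hgdef
  have hgsm : ∀ a', StronglyMeasurable[m] (g a') := by
    intro a'
    have h1 : Measurable[m] (g a') := by
      refine Measurable.sub ?_ ?_
      · exact Finset.measurable_sum _ fun a _ => (hφh a' a).inner (hGh a)
      · exact ((hHh a').inv).mul ((hwh a').inner (hGh a'))
    exact h1.stronglyMeasurable
  have hgint : ∀ a', Integrable (g a') μ := by
    intro a'
    refine Integrable.sub ?_ ?_
    · exact integrable_finset_sum _ fun a _ =>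
        aux_int_inner (toAE (hφh a' a)) (toAE (hGh a))
          (Filter.Eventually.of_forall (bφh a' a)) (Filter.Eventually.of_forall (bGh a))
    · exact (aux_int_inner (toAE (hwh a')) (toAE (hGh a'))
        (Filter.Eventually.of_forall (bwh a')) (Filter.Eventually.of_forall (bGh a'))).bdd_mul
        (toAER (hHh a').inv) (bHhinv a')
  set h3 : α → Ω → ℝ := fun a' ω =>
    ∑ a, ⟪φh a' a ω - φ a' a ω, Gh a ω - condG μ m A Y a ω⟫ with h3def
  have h3sm : ∀ a', StronglyMeasurable[m] (h3 a') := by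
    intro a'
    have h1 : Measurable[m] (h3 a') :=
      Finset.measurable_sum _ fun a _ =>
        ((hφh a' a).sub (hφ a' a)).inner ((hGh a).sub (hGsm a).measurable)
    exact h1.stronglyMeasurable
  have h3int : ∀ a', Integrable (h3 a') μ := by
    intro a'
    refine integrable_finset_sum _ fun a _ => ?_
    refine aux_int_inner (toAE ((hφh a' a).sub (hφ a' a)))
      (toAE ((hGh a).sub (hGsm a).measurable))
      (CX := Cφh' + Cφ') (CZ := CG' + CGc)
      (Filter.Eventually.of_forall fun ω => ?_) ?_
    · exact (norm_sub_le _ _).trans (add_le_add (bφh a' a ω) (bφ a' a ω))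
    · filter_upwards [bG a] with ω h1
      exact (norm_sub_le _ _).trans (add_le_add (bGh a ω) h1)
  -- remaining integrability facts
  have iP : ∀ a, Integrable (fun ω => ⟪wh a ω, Gh a ω⟫) μ := fun a =>
    aux_int_inner (toAE (hwh a)) (toAE (hGh a))
      (Filter.Eventually.of_forall (bwh a)) (Filter.Eventually.of_forall (bGh a))
  have hPint : Integrable (fun ω => ∑ a, ⟪wh a ω, Gh a ω⟫) μ :=
    integrable_finset_sum _ fun a _ => iP a
  have hgIint : ∀ a', Integrable (fun ω => g a' ω * I a' ω) μ := by
    intro a'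
    exact (((hgint a').bdd_mul (hImeas a').aestronglyMeasurable
      (Filter.Eventually.of_forall (hIbd a'))).congr
      (Filter.Eventually.of_forall fun ω => mul_comm _ _))
  have hS1int : Integrable (fun ω => ∑ a', g a' ω * I a' ω) μ :=
    integrable_finset_sum _ fun a' _ => hgIint a'
  have hiuIY : ∀ a', Integrable (fun ω => ⟪u a' ω, I a' ω • Y ω⟫) μ := by
    intro a'
    refine aux_int_inner (toAE ?_) ((hImeas a').aestronglyMeasurable.smul hY.aestronglyMeasurable)
      (hubd a') (CZ := CY') (Filter.Eventually.of_forall fun ω => ?_)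
    · exact ((hHh a').inv).smul (hwh a')
    · calc ‖I a' ω • Y ω‖ = ‖I a' ω‖ * ‖Y ω‖ := norm_smul _ _
        _ ≤ 1 * CY' := mul_le_mul (hIbd a' ω) (bY ω) (norm_nonneg _) zero_le_one
        _ = CY' := one_mul _
  have hS2int : Integrable (fun ω => ∑ a', ⟪u a' ω, I a' ω • Y ω⟫) μ :=
    integrable_finset_sum _ fun a' _ => hiuIY a'
  have hgHint : ∀ a', Integrable (fun ω => g a' ω * condH μ m A a' ω) μ := by
    intro a'
    exact (((hgint a').bdd_mul (hHaesm a') (bH a')).congr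
      (Filter.Eventually.of_forall fun ω => mul_comm _ _))
  have hS1Hint : Integrable (fun ω => ∑ a', g a' ω * condH μ m A a' ω) μ :=
    integrable_finset_sum _ fun a' _ => hgHint a'
  have iwG : ∀ a, Integrable (fun ω => ⟪wh a ω, condG μ m A Y a ω⟫) μ := fun a =>
    aux_int_inner (toAE (hwh a)) (hGaesm a)
      (Filter.Eventually.of_forall (bwh a)) (bG a)
  have hwGHint : ∀ a', Integrable
      (fun ω => ⟪wh a' ω, condG μ m A Y a' ω⟫ * ((Hh a' ω)⁻¹ * condH μ m A a' ω)) μ := by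
    intro a'
    have h1 : AEStronglyMeasurable[mΩ] (fun ω => (Hh a' ω)⁻¹ * condH μ m A a' ω) μ :=
      (toAER (hHh a').inv).mul (hHaesm a')
    have h2 : ∀ᵐ ω ∂μ, ‖(Hh a' ω)⁻¹ * condH μ m A a' ω‖ ≤ c⁻¹ * 1 := by
      filter_upwards [bHhinv a', bH a'] with ω hb1 hb2
      rw [norm_mul]
      exact mul_le_mul hb1 hb2 (norm_nonneg _) ((norm_nonneg _).trans hb1)
    exact (((iwG a').bdd_mul h1 h2).congr
      (Filter.Eventually.of_forall fun ω => mul_comm _ _))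
  have hS2Hint : Integrable (fun ω => ∑ a',
      ⟪wh a' ω, condG μ m A Y a' ω⟫ * ((Hh a' ω)⁻¹ * condH μ m A a' ω)) μ :=
    integrable_finset_sum _ fun a' _ => hwGHint a'
  have hΦint : Integrable (fun ω => ((∑ a, ⟪wh a ω, Gh a ω⟫)
      + ∑ a', g a' ω * condH μ m A a' ω)
      + ∑ a', ⟪wh a' ω, condG μ m A Y a' ω⟫ * ((Hh a' ω)⁻¹ * condH μ m A a' ω)) μ :=
    (hPint.add hS1Hint).add hS2Hint
  have hBint : Integrable (fun ω => ∑ a, ⟪w a ω, condG μ m A Y a ω⟫) μ :=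
    integrable_finset_sum _ fun a _ =>
      aux_int_inner (toAE (hw a)) (hGaesm a)
        (Filter.Eventually.of_forall (bw a)) (bG a)
  have hT1int : Integrable (fun ω => ∑ a,
      ⟪wh a ω - w a ω + ∑ a', condH μ m A a' ω • φh a' a ω, condG μ m A Y a ω⟫) μ := by
    refine integrable_finset_sum _ fun a _ => ?_
    have hmeas : AEStronglyMeasurable[mΩ]
        (fun ω => wh a ω - w a ω + ∑ a', condH μ m A a' ω • φh a' a ω) μ := by
      have h1 : Measurable[m]
          (fun ω => wh a ω - w a ω + ∑ a', condH μ m A a' ω • φh a' a ω) :=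
        ((hwh a).sub (hw a)).add
          (Finset.measurable_sum _ fun a' _ => ((hHsm a').measurable).smul (hφh a' a))
      exact toAE h1
    refine aux_int_inner hmeas (hGaesm a)
      (CX := Cwh' + Cw' + (Fintype.card α) * Cφh') ?_ (bG a)
    have hba : ∀ a', ∀ᵐ ω ∂μ, ‖condH μ m A a' ω‖ ≤ 1 := bH
    filter_upwards [ae_all_iff.2 hba] with ω hω
    calc ‖wh a ω - w a ω + ∑ a', condH μ m A a' ω • φh a' a ω‖
        ≤ ‖wh a ω - w a ω‖ + ‖∑ a', condH μ m A a' ω • φh a' a ω‖ := norm_add_le _ _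
      _ ≤ (Cwh' + Cw') + (Fintype.card α) * Cφh' := by
          refine add_le_add ((norm_sub_le _ _).trans (add_le_add (bwh a ω) (bw a ω))) ?_
          calc ‖∑ a', condH μ m A a' ω • φh a' a ω‖
              ≤ ∑ a', ‖condH μ m A a' ω • φh a' a ω‖ := norm_sum_le _ _
            _ ≤ ∑ _a' : α, Cφh' := by
                refine Finset.sum_le_sum fun a' _ => ?_
                rw [norm_smul]
                calc ‖condH μ m A a' ω‖ * ‖φh a' a ω‖ ≤ 1 * Cφh' :=
                      mul_le_mul (hω a') (bφh a' a ω) (norm_nonneg _) zero_le_one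
                  _ = Cφh' := one_mul _
            _ = (Fintype.card α) * Cφh' := by
                rw [Finset.sum_const, Finset.card_univ, nsmul_eq_mul]
  have hT2int : Integrable (fun ω => ∑ a,
      ⟪wh a ω, Gh a ω - condG μ m A Y a ω⟫ * (1 - condH μ m A a ω / Hh a ω)) μ := by
    refine integrable_finset_sum _ fun a _ => ?_
    have hinner : Integrable (fun ω => ⟪wh a ω, Gh a ω - condG μ m A Y a ω⟫) μ := by
      refine aux_int_inner (toAE (hwh a)) ((toAE (hGh a)).sub (hGaesm a))
        (Filter.Eventually.of_forall (bwh a)) (CZ := CG' + CGc) ?_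
      filter_upwards [bG a] with ω h1
      exact (norm_sub_le _ _).trans (add_le_add (bGh a ω) h1)
    have hfac : AEStronglyMeasurable[mΩ] (fun ω => 1 - condH μ m A a ω / Hh a ω) μ := by
      have hfac0 : AEStronglyMeasurable[mΩ] (fun ω => (1:ℝ) - condH μ m A a ω * (Hh a ω)⁻¹) μ :=
        aestronglyMeasurable_const.sub ((hHaesm a).mul (toAER (hHh a).inv))
      exact hfac0.congr (Filter.Eventually.of_forall fun ω => by simp [div_eq_mul_inv])
    have hfacb : ∀ᵐ ω ∂μ, ‖1 - condH μ m A a ω / Hh a ω‖ ≤ 1 + 1 * c⁻¹ := by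
      filter_upwards [bH a, bHhinv a] with ω h1 h2
      calc ‖1 - condH μ m A a ω / Hh a ω‖
          ≤ ‖(1:ℝ)‖ + ‖condH μ m A a ω / Hh a ω‖ := norm_sub_le _ _
        _ ≤ 1 + 1 * c⁻¹ := by
            refine add_le_add (le_of_eq norm_one) ?_
            rw [div_eq_mul_inv, norm_mul]
            exact mul_le_mul h1 h2 (norm_nonneg _) zero_le_one
    exact (hinner.bdd_mul hfac hfacb).congr
      (Filter.Eventually.of_forall fun ω => mul_comm _ _)
  have h3Iint : ∀ a', Integrable (fun ω => h3 a' ω * I a' ω) μ := by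
    intro a'
    exact ((h3int a').bdd_mul (hImeas a').aestronglyMeasurable
      (Filter.Eventually.of_forall (hIbd a'))).congr
      (Filter.Eventually.of_forall fun ω => mul_comm _ _)
  have h3Hint : ∀ a', Integrable (fun ω => h3 a' ω * condH μ m A a' ω) μ := by
    intro a'
    exact ((h3int a').bdd_mul (hHaesm a') (bH a')).congr
      (Filter.Eventually.of_forall fun ω => mul_comm _ _)
  have hT3Hint : Integrable (fun ω => ∑ a', h3 a' ω * condH μ m A a' ω) μ :=
    integrable_finset_sum _ fun a' _ => h3Hint a'
  -- picking out the treated arm from sums against the indicators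
  have hpick : ∀ (ω : Ω) (f : α → ℝ), ∑ a', f a' * I a' ω = f (A ω) := by
    intro ω f
    simp only [hIdef]
    simp [mul_ite, Finset.sum_ite_eq]
  -- the key tower-property steps
  have key1 : ∀ a', ∫ ω, g a' ω * I a' ω ∂μ = ∫ ω, g a' ω * condH μ m A a' ω ∂μ :=
    fun a' => aux_tower_mul hm (hgsm a') (hIint a') (hgIint a')
  have key3 : ∀ a', ∫ ω, h3 a' ω * I a' ω ∂μ = ∫ ω, h3 a' ω * condH μ m A a' ω ∂μ :=
    fun a' => aux_tower_mul hm (h3sm a') (hIint a') (h3Iint a')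
  have key2 : ∀ a', ∫ ω, ⟪u a' ω, I a' ω • Y ω⟫ ∂μ
      = ∫ ω, ⟪wh a' ω, condG μ m A Y a' ω⟫ * ((Hh a' ω)⁻¹ * condH μ m A a' ω) ∂μ := by
    intro a'
    rw [aux_tower_inner hm (husm a') (hubd a') (hIY a')]
    refine integral_congr_ae ?_
    filter_upwards [hKG a'] with ω hK
    have h1 : (μ[fun ω => I a' ω • Y ω|m]) ω = condH μ m A a' ω • condG μ m A Y a' ω := hK
    rw [h1, hudef]
    simp only [real_inner_smul_left, real_inner_smul_right]
    ring
  -- rewrite of the first integral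
  have hFeq : ∀ ω, ((∑ a, ⟪wh a ω + φh (A ω) a ω, Gh a ω⟫)
        + ⟪wh (A ω) ω, Y ω - Gh (A ω) ω⟫ / Hh (A ω) ω)
      = ((∑ a, ⟪wh a ω, Gh a ω⟫) + ∑ a', g a' ω * I a' ω)
        + ∑ a', ⟪u a' ω, I a' ω • Y ω⟫ := by
    intro ω
    have h2 : ∑ a', ⟪u a' ω, I a' ω • Y ω⟫ = ∑ a', (fun b => ⟪u b ω, Y ω⟫) a' * I a' ω := by
      refine Finset.sum_congr rfl fun a' _ => ?_
      rw [real_inner_smul_right]; ring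
    rw [h2, hpick ω (fun b => ⟪u b ω, Y ω⟫), hpick ω (fun b => g b ω)]
    simp only [hgdef, hudef, inner_add_left, inner_sub_right, real_inner_smul_left,
      Finset.sum_add_distrib, div_eq_mul_inv]
    ring
  have hLHS : (∫ ω, ((∑ a, ⟪wh a ω + φh (A ω) a ω, Gh a ω⟫)
        + ⟪wh (A ω) ω, Y ω - Gh (A ω) ω⟫ / Hh (A ω) ω) ∂μ)
      = ∫ ω, (((∑ a, ⟪wh a ω, Gh a ω⟫) + ∑ a', g a' ω * condH μ m A a' ω)
        + ∑ a', ⟪wh a' ω, condG μ m A Y a' ω⟫ * ((Hh a' ω)⁻¹ * condH μ m A a' ω)) ∂μ := by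
    calc (∫ ω, ((∑ a, ⟪wh a ω + φh (A ω) a ω, Gh a ω⟫)
        + ⟪wh (A ω) ω, Y ω - Gh (A ω) ω⟫ / Hh (A ω) ω) ∂μ)
        = ∫ ω, (((∑ a, ⟪wh a ω, Gh a ω⟫) + ∑ a', g a' ω * I a' ω)
            + ∑ a', ⟪u a' ω, I a' ω • Y ω⟫) ∂μ :=
          integral_congr_ae (Filter.Eventually.of_forall hFeq)
      _ = ((∫ ω, ∑ a, ⟪wh a ω, Gh a ω⟫ ∂μ) + ∫ ω, ∑ a', g a' ω * I a' ω ∂μ)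
            + ∫ ω, ∑ a', ⟪u a' ω, I a' ω • Y ω⟫ ∂μ := by
          have hPS1 : Integrable (fun ω => (∑ a, ⟪wh a ω, Gh a ω⟫)
              + ∑ a', g a' ω * I a' ω) μ := hPint.add hS1int
          rw [integral_add hPS1 hS2int, integral_add hPint hS1int]
      _ = ((∫ ω, ∑ a, ⟪wh a ω, Gh a ω⟫ ∂μ) + ∑ a', ∫ ω, g a' ω * I a' ω ∂μ)
            + ∑ a', ∫ ω, ⟪u a' ω, I a' ω • Y ω⟫ ∂μ := by
          rw [integral_finset_sum _ fun a' _ => hgIint a',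
            integral_finset_sum _ fun a' _ => hiuIY a']
      _ = ((∫ ω, ∑ a, ⟪wh a ω, Gh a ω⟫ ∂μ) + ∑ a', ∫ ω, g a' ω * condH μ m A a' ω ∂μ)
            + ∑ a', ∫ ω, ⟪wh a' ω, condG μ m A Y a' ω⟫
              * ((Hh a' ω)⁻¹ * condH μ m A a' ω) ∂μ := by
          rw [Finset.sum_congr rfl fun a' _ => key1 a',
            Finset.sum_congr rfl fun a' _ => key2 a']
      _ = ((∫ ω, ∑ a, ⟪wh a ω, Gh a ω⟫ ∂μ) + ∫ ω, ∑ a', g a' ω * condH μ m A a' ω ∂μ)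
            + ∫ ω, ∑ a', ⟪wh a' ω, condG μ m A Y a' ω⟫
              * ((Hh a' ω)⁻¹ * condH μ m A a' ω) ∂μ := by
          rw [integral_finset_sum _ fun a' _ => hgHint a',
            integral_finset_sum _ fun a' _ => hwGHint a']
      _ = _ := by
          have hPS1H : Integrable (fun ω => (∑ a, ⟪wh a ω, Gh a ω⟫)
              + ∑ a', g a' ω * condH μ m A a' ω) μ := hPint.add hS1Hint
          rw [← integral_add hPint hS1Hint, ← integral_add hPS1H hS2Hint]
  -- rewrite of the last integral
  have hT3eq : ∀ ω, (∑ a, ⟪φh (A ω) a ω - φ (A ω) a ω, Gh a ω - condG μ m A Y a ω⟫)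
      = ∑ a', (fun b => h3 b ω) a' * I a' ω := by
    intro ω
    rw [hpick ω (fun b => h3 b ω)]
  have hT3 : (∫ ω, ∑ a, ⟪φh (A ω) a ω - φ (A ω) a ω, Gh a ω - condG μ m A Y a ω⟫ ∂μ)
      = ∫ ω, ∑ a', h3 a' ω * condH μ m A a' ω ∂μ := by
    calc (∫ ω, ∑ a, ⟪φh (A ω) a ω - φ (A ω) a ω, Gh a ω - condG μ m A Y a ω⟫ ∂μ)
        = ∫ ω, ∑ a', h3 a' ω * I a' ω ∂μ :=
          integral_congr_ae (Filter.Eventually.of_forall hT3eq)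
      _ = ∑ a', ∫ ω, h3 a' ω * I a' ω ∂μ := integral_finset_sum _ fun a' _ => h3Iint a'
      _ = ∑ a', ∫ ω, h3 a' ω * condH μ m A a' ω ∂μ :=
          Finset.sum_congr rfl fun a' _ => key3 a'
      _ = ∫ ω, ∑ a', h3 a' ω * condH μ m A a' ω ∂μ :=
          (integral_finset_sum _ fun a' _ => h3Hint a').symm
  rw [hLHS, hT3]
  have hT12 : Integrable (fun ω => (∑ a,
      ⟪wh a ω - w a ω + ∑ a', condH μ m A a' ω • φh a' a ω, condG μ m A Y a ω⟫)
      + ∑ a, ⟪wh a ω, Gh a ω - condG μ m A Y a ω⟫ * (1 - condH μ m A a ω / Hh a ω)) μ :=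
    hT1int.add hT2int
  rw [← integral_sub hΦint hBint, ← integral_add hT1int hT2int,
    ← integral_add hT12 hT3Hint]
  refine integral_congr_ae ?_
  filter_upwards [ae_all_iff.2 hφ0] with ω h0
  -- pointwise algebra
  have e0 : ∀ (a : α) (v : EuclideanSpace ℝ (Fin n)),
      ∑ a', condH μ m A a' ω * ⟪φ a' a ω, v⟫ = 0 := by
    intro a v
    have h1 : ∑ a', condH μ m A a' ω * ⟪φ a' a ω, v⟫
        = ⟪∑ a', condH μ m A a' ω • φ a' a ω, v⟫ := by
      rw [sum_inner]
      exact Finset.sum_congr rfl fun a' _ => (real_inner_smul_left _ _ _).symm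
    rw [h1, h0 a, inner_zero_left]
  have hT1e : (∑ a, ⟪wh a ω - w a ω + ∑ a', condH μ m A a' ω • φh a' a ω,
        condG μ m A Y a ω⟫)
      = ∑ a, (⟪wh a ω, condG μ m A Y a ω⟫ - ⟪w a ω, condG μ m A Y a ω⟫
        + ∑ a', condH μ m A a' ω * ⟪φh a' a ω, condG μ m A Y a ω⟫) := by
    refine Finset.sum_congr rfl fun a _ => ?_
    simp only [inner_add_left, inner_sub_left, sum_inner, real_inner_smul_left]
  have hT2e : (∑ a, ⟪wh a ω, Gh a ω - condG μ m A Y a ω⟫ * (1 - condH μ m A a ω / Hh a ω))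
      = ∑ a, (⟪wh a ω, Gh a ω⟫ - ⟪wh a ω, condG μ m A Y a ω⟫
        - (Hh a ω)⁻¹ * ⟪wh a ω, Gh a ω⟫ * condH μ m A a ω
        + ⟪wh a ω, condG μ m A Y a ω⟫ * ((Hh a ω)⁻¹ * condH μ m A a ω)) := by
    refine Finset.sum_congr rfl fun a _ => ?_
    simp only [inner_sub_right, div_eq_mul_inv]
    ring
  have hT3e : (∑ a', h3 a' ω * condH μ m A a' ω)
      = ∑ a, ((∑ a', condH μ m A a' ω * ⟪φh a' a ω, Gh a ω⟫)
        - ∑ a', condH μ m A a' ω * ⟪φh a' a ω, condG μ m A Y a ω⟫) := by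
    simp only [h3def]
    calc (∑ a', (∑ a, ⟪φh a' a ω - φ a' a ω, Gh a ω - condG μ m A Y a ω⟫)
          * condH μ m A a' ω)
        = ∑ a', ∑ a, (condH μ m A a' ω * ⟪φh a' a ω, Gh a ω⟫
            - condH μ m A a' ω * ⟪φh a' a ω, condG μ m A Y a ω⟫
            - condH μ m A a' ω * ⟪φ a' a ω, Gh a ω⟫
            + condH μ m A a' ω * ⟪φ a' a ω, condG μ m A Y a ω⟫) := by
          refine Finset.sum_congr rfl fun a' _ => ?_
          rw [Finset.sum_mul]
          refine Finset.sum_congr rfl fun a _ => ?_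
          simp only [inner_sub_left, inner_sub_right]
          ring
      _ = ∑ a, ∑ a', (condH μ m A a' ω * ⟪φh a' a ω, Gh a ω⟫
            - condH μ m A a' ω * ⟪φh a' a ω, condG μ m A Y a ω⟫
            - condH μ m A a' ω * ⟪φ a' a ω, Gh a ω⟫
            + condH μ m A a' ω * ⟪φ a' a ω, condG μ m A Y a ω⟫) := Finset.sum_comm
      _ = _ := by
          refine Finset.sum_congr rfl fun a _ => ?_
          simp only [Finset.sum_add_distrib, Finset.sum_sub_distrib]
          rw [e0 a (Gh a ω), e0 a (condG μ m A Y a ω)]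
          ring
  have hL1 : (∑ a', g a' ω * condH μ m A a' ω)
      = (∑ a, ∑ a', condH μ m A a' ω * ⟪φh a' a ω, Gh a ω⟫)
        - ∑ a, (Hh a ω)⁻¹ * ⟪wh a ω, Gh a ω⟫ * condH μ m A a ω := by
    simp only [hgdef, sub_mul]
    rw [Finset.sum_sub_distrib]
    congr 1
    calc (∑ a', (∑ a, ⟪φh a' a ω, Gh a ω⟫) * condH μ m A a' ω)
        = ∑ a', ∑ a, condH μ m A a' ω * ⟪φh a' a ω, Gh a ω⟫ := by
          refine Finset.sum_congr rfl fun a' _ => ?_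
          rw [Finset.sum_mul]
          exact Finset.sum_congr rfl fun a _ => mul_comm _ _
      _ = _ := Finset.sum_comm
  rw [hL1, hT1e, hT2e, hT3e]
  simp only [Finset.sum_add_distrib, Finset.sum_sub_distrib]
  ring
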